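/- arXiv:2011.10195 — 2 statements merged into one kernel-verified Lean document; each statement's English description precedes it below -/
import Mathlib

section
/- Let X_1, X_2, … be identically distributed real random variables with common cdf F such that both F and its quantile function F^{-1}(t) = inf{x : F(x) ≥ t} are continuous, and suppose the empirical cdfs satisfy sup_{x∈ℝ} |F_n(x) − F(x)| → 0 in probability, where F_n(x) = n^{-1} Σ_{t=1}^n 1{X_t ≤ x}. Then for every closed interval [t_0, t_1] ⊂ (0, 1), sup_{t∈[t_0,t_1]} |F_n^{-1}(t) − F^{-1}(t)| → 0 in probability as n → ∞, where F_n^{-1}(t) = inf{x : F_n(x) ≥ t} is the empirical quantile function. -/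
open MeasureTheory ProbabilityTheory Filter
open scoped Classical

/-- The cumulative distribution function of a random variable `X` under `P`. -/
noncomputable def cdfOf {Ω : Type*} [MeasurableSpace Ω] (P : Measure Ω) (X : Ω → ℝ) : ℝ → ℝ :=
  fun x => (P {ω | X ω ≤ x}).toReal

/-- The empirical cdf of the sample `X 1, …, X n`. -/
noncomputable def empCDF {Ω : Type*} (X : ℕ → Ω → ℝ) (n : ℕ) (ω : Ω) (x : ℝ) : ℝ :=
  (n : ℝ)⁻¹ * ∑ t ∈ Finset.Icc 1 n, if X t ω ≤ x then (1 : ℝ) else 0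

/-- The quantile function `G⁻¹ t = inf {x : G x ≥ t}` of a (c)df `G`. -/
noncomputable def quantile (G : ℝ → ℝ) (t : ℝ) : ℝ := sInf {x | t ≤ G x}

/-- Convergence in probability of `Z n` to the constant `c`. -/
def TendstoInProb {Ω : Type*} [MeasurableSpace Ω] (P : Measure Ω)
    (Z : ℕ → Ω → ℝ) (c : ℝ) : Prop :=
  ∀ ε : ℝ, 0 < ε → Tendsto (fun n => P {ω | ε ≤ |Z n ω - c|}) atTop (nhds 0)

/-- Key deterministic lemma: uniform closeness of cdfs implies uniform closeness of
quantiles on compact subintervals of `(0,1)`. -/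
lemma quantile_key (F : ℝ → ℝ) (hFmono : Monotone F)
    (hF1 : Tendsto F atTop (nhds 1)) (hF0 : Tendsto F atBot (nhds 0))
    (hq : ContinuousOn (quantile F) (Set.Ioo 0 1))
    (t₀ t₁ : ℝ) (h0 : 0 < t₀) (h01 : t₀ ≤ t₁) (h1 : t₁ < 1)
    (ε : ℝ) (hε : 0 < ε) :
    ∃ δ : ℝ, 0 < δ ∧ ∀ G : ℝ → ℝ, (∀ x, |G x - F x| ≤ δ) →
      ∀ t ∈ Set.Icc t₀ t₁, |quantile G t - quantile F t| ≤ ε := by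
  -- basic facts about sets `{x | s ≤ F x}`
  have hne : ∀ s : ℝ, s < 1 → {x | s ≤ F x}.Nonempty := by
    intro s hs
    obtain ⟨x, hx⟩ := (hF1.eventually (eventually_gt_nhds hs)).exists
    exact ⟨x, hx.le⟩
  have hbdd : ∀ s : ℝ, 0 < s → BddBelow {x | s ≤ F x} := by
    intro s hs
    obtain ⟨x₀, hx₀⟩ := (hF0.eventually (eventually_lt_nhds hs)).exists
    refine ⟨x₀, fun x hx => ?_⟩
    by_contra hlt
    push_neg at hlt
    exact absurd (le_trans hx (hFmono hlt.le)) (not_le.mpr hx₀)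
  -- uniform continuity of the quantile on a slightly larger compact interval
  set a : ℝ := t₀ / 2 with ha
  set b : ℝ := (1 + t₁) / 2 with hb
  have hsub : Set.Icc a b ⊆ Set.Ioo 0 1 := by
    intro x hx
    constructor <;> [nlinarith [hx.1]; nlinarith [hx.2]]
  have huc : UniformContinuousOn (quantile F) (Set.Icc a b) :=
    isCompact_Icc.uniformContinuousOn_of_continuous (hq.mono hsub)
  rw [Metric.uniformContinuousOn_iff] at huc
  obtain ⟨δ₁, hδ₁, huc⟩ := huc ε hε
  refine ⟨min (δ₁ / 2) (min (t₀ / 2) ((1 - t₁) / 2)), lt_min (by linarith) (lt_min (by linarith) (by linarith)), ?_⟩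
  set δ := min (δ₁ / 2) (min (t₀ / 2) ((1 - t₁) / 2)) with hδdef
  have hδpos : 0 < δ := lt_min (by linarith) (lt_min (by linarith) (by linarith))
  have hδa : δ ≤ t₀ / 2 := le_trans (min_le_right _ _) (min_le_left _ _)
  have hδb : δ ≤ (1 - t₁) / 2 := le_trans (min_le_right _ _) (min_le_right _ _)
  have hδ1 : δ < δ₁ := lt_of_le_of_lt (min_le_left _ _) (by linarith)
  intro G hGF t ht
  have ht0 : t₀ ≤ t := ht.1
  have ht1 : t ≤ t₁ := ht.2
  have hmem1 : t - δ ∈ Set.Icc a b := by constructor <;> simp only [ha, hb] <;> linarith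
  have hmem2 : t ∈ Set.Icc a b := by constructor <;> simp only [ha, hb] <;> linarith
  have hmem3 : t + δ ∈ Set.Icc a b := by constructor <;> simp only [ha, hb] <;> linarith
  have hbddG : BddBelow {x | t ≤ G x} := by
    refine (hbdd (t - δ) (by linarith)).mono ?_
    intro x hx
    have := abs_le.mp (hGF x)
    simp only [Set.mem_setOf_eq] at hx ⊢
    linarith
  have hneG : {x | t ≤ G x}.Nonempty := by
    obtain ⟨x, hx⟩ := hne (t + δ) (by linarith)
    have := abs_le.mp (hGF x)
    exact ⟨x, by simp only [Set.mem_setOf_eq] at hx ⊢; linarith⟩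
  have hle1 : quantile G t ≤ quantile F (t + δ) := by
    refine csInf_le_csInf hbddG (hne (t + δ) (by linarith)) ?_
    intro x hx
    have := abs_le.mp (hGF x)
    simp only [Set.mem_setOf_eq] at hx ⊢
    linarith
  have hle2 : quantile F (t - δ) ≤ quantile G t := by
    refine csInf_le_csInf (hbdd (t - δ) (by linarith)) hneG ?_
    intro x hx
    have := abs_le.mp (hGF x)
    simp only [Set.mem_setOf_eq] at hx ⊢
    linarith
  have hmon1 : quantile F t ≤ quantile F (t + δ) := by
    refine csInf_le_csInf (hbdd t (by linarith)) (hne (t + δ) (by linarith)) ?_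
    intro x hx
    simp only [Set.mem_setOf_eq] at hx ⊢
    linarith
  have hmon2 : quantile F (t - δ) ≤ quantile F t := by
    refine csInf_le_csInf (hbdd (t - δ) (by linarith)) (hne t (by linarith)) ?_
    intro x hx
    simp only [Set.mem_setOf_eq] at hx ⊢
    linarith
  have huc1 : dist (quantile F (t + δ)) (quantile F t) < ε := by
    refine huc _ hmem3 _ hmem2 ?_
    rw [Real.dist_eq]
    rw [show t + δ - t = δ by ring, abs_of_pos hδpos]
    exact hδ1
  have huc2 : dist (quantile F (t - δ)) (quantile F t) < ε := by
    refine huc _ hmem1 _ hmem2 ?_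
    rw [Real.dist_eq]
    rw [show t - δ - t = -δ by ring, abs_neg, abs_of_pos hδpos]
    exact hδ1
  rw [Real.dist_eq] at huc1 huc2
  have h1' := abs_lt.mp huc1
  have h2' := abs_lt.mp huc2
  rw [abs_le]
  constructor <;> linarith [h1'.1, h1'.2, h2'.1, h2'.2]

theorem stmt_9 {Ω : Type*} [MeasurableSpace Ω] (P : Measure Ω) [IsProbabilityMeasure P]
    (X : ℕ → Ω → ℝ) (hmeas : ∀ t, Measurable (X t))
    (hid : ∀ t : ℕ, 1 ≤ t → IdentDistrib (X t) (X 1) P P)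
    (hcont : Continuous (cdfOf P (X 1)))
    (hqcont : ContinuousOn (quantile (cdfOf P (X 1))) (Set.Ioo 0 1))
    (hgc : ∀ ε : ℝ, 0 < ε →
      Tendsto (fun n => P {ω | ε ≤ ⨆ x : ℝ, |empCDF X n ω x - cdfOf P (X 1) x|})
        atTop (nhds 0)) :
    ∀ t₀ t₁ : ℝ, 0 < t₀ → t₀ ≤ t₁ → t₁ < 1 →
      TendstoInProb P
        (fun n ω => ⨆ t : Set.Icc t₀ t₁,
          |quantile (empCDF X n ω) (t : ℝ) - quantile (cdfOf P (X 1)) (t : ℝ)|) 0 := by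
  intro t₀ t₁ h0 h01 h1
  set F := cdfOf P (X 1) with hF
  -- identify F with the cdf of the pushforward measure
  set μ := P.map (X 1) with hμ
  haveI : IsProbabilityMeasure μ := Measure.isProbabilityMeasure_map (hmeas 1).aemeasurable
  have hFeq : ∀ x, F x = cdf μ x := by
    intro x
    rw [cdf_eq_real, measureReal_def, hμ, Measure.map_apply (hmeas 1) measurableSet_Iic]
    rfl
  have hFfun : F = fun x => cdf μ x := funext hFeq
  have hFmono : Monotone F := by rw [hFfun]; exact monotone_cdf μ
  have hF1 : Tendsto F atTop (nhds 1) := by rw [hFfun]; exact tendsto_cdf_atTop μ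
  have hF0 : Tendsto F atBot (nhds 0) := by rw [hFfun]; exact tendsto_cdf_atBot μ
  have hFbnd : ∀ x, 0 ≤ F x ∧ F x ≤ 1 := by
    intro x; rw [hFeq]; exact ⟨cdf_nonneg μ x, cdf_le_one μ x⟩
  -- bounds on empirical cdf
  have hEbnd : ∀ n ω x, 0 ≤ empCDF X n ω x ∧ empCDF X n ω x ≤ 1 := by
    intro n ω x
    unfold empCDF
    constructor
    · apply mul_nonneg (by positivity)
      apply Finset.sum_nonneg
      intro i _
      split <;> norm_num
    · have hsum : ∑ t ∈ Finset.Icc 1 n, (if X t ω ≤ x then (1 : ℝ) else 0) ≤ n := by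
        calc ∑ t ∈ Finset.Icc 1 n, (if X t ω ≤ x then (1 : ℝ) else 0)
            ≤ ∑ t ∈ Finset.Icc 1 n, (1 : ℝ) := by
              apply Finset.sum_le_sum; intro i _; split <;> norm_num
          _ = n := by simp [Nat.card_Icc]
      rcases Nat.eq_zero_or_pos n with hn | hn
      · subst hn; simp
      · have hn' : (0 : ℝ) < n := by exact_mod_cast hn
        calc (n : ℝ)⁻¹ * ∑ t ∈ Finset.Icc 1 n, (if X t ω ≤ x then (1 : ℝ) else 0)
            ≤ (n : ℝ)⁻¹ * n := by
              apply mul_le_mul_of_nonneg_left hsum (by positivity)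
          _ = 1 := inv_mul_cancel₀ hn'.ne'
  intro ε hε
  obtain ⟨δ, hδpos, hkey⟩ := quantile_key F hFmono hF1 hF0 hqcont t₀ t₁ h0 h01 h1
    (ε / 2) (by linarith)
  haveI : Nonempty (Set.Icc t₀ t₁) := Set.Nonempty.to_subtype (Set.nonempty_Icc.mpr h01)
  refine tendsto_of_tendsto_of_tendsto_of_le_of_le tendsto_const_nhds (hgc δ hδpos)
    (fun n => zero_le) ?_
  intro n
  apply measure_mono
  intro ω hω
  simp only [Set.mem_setOf_eq, sub_zero] at hω ⊢
  by_contra hlt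
  push_neg at hlt
  set G := empCDF X n ω with hG
  -- from sup < δ deduce pointwise bound
  have hbddA : BddAbove (Set.range fun x => |G x - F x|) := by
    refine ⟨2, ?_⟩
    rintro _ ⟨x, rfl⟩
    have h1 := hEbnd n ω x
    have h2 := hFbnd x
    rw [abs_le]
    constructor <;> linarith [h1.1, h1.2, h2.1, h2.2]
  have hptw : ∀ x, |G x - F x| ≤ δ := by
    intro x
    exact le_of_lt (lt_of_le_of_lt (le_ciSup hbddA x) hlt)
  have hq := hkey G hptw
  -- the sup over t is at most ε/2, contradicting ε ≤ |sup|
  have hZle : (⨆ t : Set.Icc t₀ t₁, |quantile G (t : ℝ) - quantile F (t : ℝ)|) ≤ ε / 2 :=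
    ciSup_le fun t => hq t t.2
  have hZnonneg : 0 ≤ ⨆ t : Set.Icc t₀ t₁, |quantile G (t : ℝ) - quantile F (t : ℝ)| :=
    Real.iSup_nonneg fun t => abs_nonneg _
  rw [abs_of_nonneg hZnonneg] at hω
  linarith
end

section
/- Let (X_t)_{t∈ℤ} be a sequence of real random variables, let (δ_t)_{t∈ℤ} be iid real random variables independent of the sequence (X_t), let g : ℝ³ → ℝ be measurable, and define ξ_t = g(X_t, δ_t, δ_{t-1}). Then for every integer t ≥ 2, the strong mixing coefficients satisfy α_ξ(t) ≤ α_X(t), i.e., sup{|P(A∩B) − P(A)P(B)| : A ∈ σ(ξ_u : u ≤ 0), B ∈ σ(ξ_v : v ≥ t)} ≤ sup{|P(A∩B) − P(A)P(B)| : A ∈ σ(X_u : u ≤ 0), B ∈ σ(X_v : v ≥ t)}. -/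
open MeasureTheory ProbabilityTheory Filter

namespace StrongMixAux

lemma comap_prodMk' {α β γ : Type*} (mβ : MeasurableSpace β) (mγ : MeasurableSpace γ)
    (f : α → β) (g : α → γ) :
    (mβ.prod mγ).comap (fun a => (f a, g a)) = mβ.comap f ⊔ mγ.comap g := by
  show (mβ.comap Prod.fst ⊔ mγ.comap Prod.snd).comap _ = _
  rw [MeasurableSpace.comap_sup, MeasurableSpace.comap_comp, MeasurableSpace.comap_comp]
  rfl

lemma comap_prodMk {α β γ : Type*} [mβ : MeasurableSpace β] [mγ : MeasurableSpace γ]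
    (f : α → β) (g : α → γ) :
    MeasurableSpace.comap (fun a => (f a, g a)) inferInstance = mβ.comap f ⊔ mγ.comap g :=
  comap_prodMk' mβ mγ f g

lemma prod_mono {α β : Type*} {m₁ m₁' : MeasurableSpace α} {m₂ m₂' : MeasurableSpace β}
    (h₁ : m₁ ≤ m₁') (h₂ : m₂ ≤ m₂') : m₁.prod m₂ ≤ m₁'.prod m₂' :=
  sup_le_sup (MeasurableSpace.comap_mono h₁) (MeasurableSpace.comap_mono h₂)

lemma comap_pi_eq {ι Ω : Type*} (f : ι → Ω → ℝ) :
    (MeasurableSpace.pi : MeasurableSpace (ι → ℝ)).comap (fun ω (i : ι) => f i ω)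
      = ⨆ i, MeasurableSpace.comap (f i) inferInstance := by
  show (⨆ i, (inferInstance : MeasurableSpace ℝ).comap fun p : ι → ℝ => p i).comap _ = _
  rw [MeasurableSpace.comap_iSup]
  exact iSup_congr fun i => MeasurableSpace.comap_comp

lemma step1 {a b c : ENNReal} {α : ℝ} (ha : a ≤ 1) (hb : b ≤ 1) (hc : c ≤ 1)
    (h : |a.toReal - b.toReal * c.toReal| ≤ α) :
    a ≤ b * c + ENNReal.ofReal α ∧ b * c ≤ a + ENNReal.ofReal α := by
  have hat : a ≠ ⊤ := (ha.trans_lt ENNReal.one_lt_top).ne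
  have hbt : b ≠ ⊤ := (hb.trans_lt ENNReal.one_lt_top).ne
  have hct : c ≠ ⊤ := (hc.trans_lt ENNReal.one_lt_top).ne
  obtain ⟨h1, h2⟩ := abs_le.mp h
  have hbc : ENNReal.ofReal (b.toReal * c.toReal) = b * c := by
    rw [ENNReal.ofReal_mul ENNReal.toReal_nonneg, ENNReal.ofReal_toReal hbt,
      ENNReal.ofReal_toReal hct]
  constructor
  · calc a = ENNReal.ofReal a.toReal := (ENNReal.ofReal_toReal hat).symm
      _ ≤ ENNReal.ofReal (b.toReal * c.toReal + α) := ENNReal.ofReal_le_ofReal (by linarith)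
      _ ≤ ENNReal.ofReal (b.toReal * c.toReal) + ENNReal.ofReal α := ENNReal.ofReal_add_le
      _ = b * c + ENNReal.ofReal α := by rw [hbc]
  · calc b * c = ENNReal.ofReal (b.toReal * c.toReal) := hbc.symm
      _ ≤ ENNReal.ofReal (a.toReal + α) := ENNReal.ofReal_le_ofReal (by linarith)
      _ ≤ ENNReal.ofReal a.toReal + ENNReal.ofReal α := ENNReal.ofReal_add_le
      _ = a + ENNReal.ofReal α := by rw [ENNReal.ofReal_toReal hat]

lemma step2 {a b : ENNReal} {α : ℝ} (ha : a ≠ ⊤) (hb : b ≠ ⊤) (hα : 0 ≤ α)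
    (h1 : a ≤ b + ENNReal.ofReal α) (h2 : b ≤ a + ENNReal.ofReal α) :
    |a.toReal - b.toReal| ≤ α := by
  rw [abs_sub_le_iff]
  constructor
  · have := ENNReal.toReal_mono (ENNReal.add_ne_top.mpr ⟨hb, ENNReal.ofReal_ne_top⟩) h1
    rw [ENNReal.toReal_add hb ENNReal.ofReal_ne_top, ENNReal.toReal_ofReal hα] at this
    linarith
  · have := ENNReal.toReal_mono (ENNReal.add_ne_top.mpr ⟨ha, ENNReal.ofReal_ne_top⟩) h2
    rw [ENNReal.toReal_add ha ENNReal.ofReal_ne_top, ENNReal.toReal_ofReal hα] at this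
    linarith

lemma abstract_bound {Ω : Type*} [MeasurableSpace Ω] (P : Measure Ω)
    [IsProbabilityMeasure P] {Γ Λ₀ Λ₁ : Type*} (MF MG : MeasurableSpace Γ)
    [mΓ : MeasurableSpace Γ] [MeasurableSpace Λ₀]
    [MeasurableSpace Λ₁] (XX : Ω → Γ) (d0 : Ω → Λ₀) (d1 : Ω → Λ₁)
    (hXX : Measurable XX) (hd0 : Measurable d0) (hd1 : Measurable d1)
    (h01 : IndepFun d0 d1 P)
    (hpair : IndepFun (fun ω => (d0 ω, d1 ω)) XX P)
    (hMF : MF ≤ mΓ) (hMG : MG ≤ mΓ)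
    (α : ℝ) (hα : 0 ≤ α)
    (hcore : ∀ A B : Set Ω, MeasurableSet[MF.comap XX] A → MeasurableSet[MG.comap XX] B →
      |(P (A ∩ B)).toReal - (P A).toReal * (P B).toReal| ≤ α)
    {A B : Set Ω}
    (hA : MeasurableSet[MF.comap XX ⊔ MeasurableSpace.comap d0 inferInstance] A)
    (hB : MeasurableSet[MG.comap XX ⊔ MeasurableSpace.comap d1 inferInstance] B) :
    |(P (A ∩ B)).toReal - (P A).toReal * (P B).toReal| ≤ α := by
  -- rewrite the sup σ-algebras as comaps of pair maps
  have hsupA : MF.comap XX ⊔ MeasurableSpace.comap d0 inferInstance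
      = ((inferInstance : MeasurableSpace Λ₀).prod MF).comap (fun ω => (d0 ω, XX ω)) := by
    rw [comap_prodMk', sup_comm]
  have hsupB : MG.comap XX ⊔ MeasurableSpace.comap d1 inferInstance
      = ((inferInstance : MeasurableSpace Λ₁).prod MG).comap (fun ω => (d1 ω, XX ω)) := by
    rw [comap_prodMk', sup_comm]
  rw [hsupA] at hA
  rw [hsupB] at hB
  obtain ⟨A', hA'm, rfl⟩ := MeasurableSpace.measurableSet_comap.mp hA
  obtain ⟨B', hB'm, rfl⟩ := MeasurableSpace.measurableSet_comap.mp hB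
  have hA'c : MeasurableSet A' := prod_mono le_rfl hMF _ hA'm
  have hB'c : MeasurableSet B' := prod_mono le_rfl hMG _ hB'm
  -- measures
  set μ := P.map XX with hμdef
  set ν₀ := P.map d0 with hν₀def
  set ν₁ := P.map d1 with hν₁def
  haveI : IsProbabilityMeasure μ := Measure.isProbabilityMeasure_map hXX.aemeasurable
  haveI : IsProbabilityMeasure ν₀ := Measure.isProbabilityMeasure_map hd0.aemeasurable
  haveI : IsProbabilityMeasure ν₁ := Measure.isProbabilityMeasure_map hd1.aemeasurable
  set κ := ν₀.prod ν₁ with hκdef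
  haveI : IsProbabilityMeasure κ := by rw [hκdef]; infer_instance
  have hκ : P.map (fun ω => (d0 ω, d1 ω)) = κ :=
    (indepFun_iff_map_prod_eq_prod_map_map hd0.aemeasurable hd1.aemeasurable).mp h01
  have hρ : P.map (fun ω => ((d0 ω, d1 ω), XX ω)) = κ.prod μ := by
    rw [← hκ]
    exact (indepFun_iff_map_prod_eq_prod_map_map (hd0.prodMk hd1).aemeasurable
      hXX.aemeasurable).mp hpair
  have h0X : IndepFun d0 XX P := by
    have := hpair.comp measurable_fst measurable_id
    exact this
  have h1X : IndepFun d1 XX P := by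
    have := hpair.comp measurable_snd measurable_id
    exact this
  have hmapA : P.map (fun ω => (d0 ω, XX ω)) = ν₀.prod μ :=
    (indepFun_iff_map_prod_eq_prod_map_map hd0.aemeasurable hXX.aemeasurable).mp h0X
  have hmapB : P.map (fun ω => (d1 ω, XX ω)) = ν₁.prod μ :=
    (indepFun_iff_map_prod_eq_prod_map_map hd1.aemeasurable hXX.aemeasurable).mp h1X
  -- express the three probabilities as integrals
  have hPA : P ((fun ω => (d0 ω, XX ω)) ⁻¹' A') = ∫⁻ y0, μ (Prod.mk y0 ⁻¹' A') ∂ν₀ := by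
    rw [← Measure.map_apply (hd0.prodMk hXX) hA'c, hmapA, Measure.prod_apply hA'c]
  have hPB : P ((fun ω => (d1 ω, XX ω)) ⁻¹' B') = ∫⁻ y1, μ (Prod.mk y1 ⁻¹' B') ∂ν₁ := by
    rw [← Measure.map_apply (hd1.prodMk hXX) hB'c, hmapB, Measure.prod_apply hB'c]
  -- the intersection
  set Φ : Ω → (Λ₀ × Λ₁) × Γ := fun ω => ((d0 ω, d1 ω), XX ω) with hΦdef
  have hΦ : Measurable Φ := ((hd0.prodMk hd1).prodMk hXX)
  set At : Set ((Λ₀ × Λ₁) × Γ) := (fun e : (Λ₀ × Λ₁) × Γ => (e.1.1, e.2)) ⁻¹' A' with hAtdef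
  set Bt : Set ((Λ₀ × Λ₁) × Γ) := (fun e : (Λ₀ × Λ₁) × Γ => (e.1.2, e.2)) ⁻¹' B' with hBtdef
  have hAtc : MeasurableSet At := (measurable_fst.fst.prodMk measurable_snd) hA'c
  have hBtc : MeasurableSet Bt := (measurable_fst.snd.prodMk measurable_snd) hB'c
  have hABpre : (fun ω => (d0 ω, XX ω)) ⁻¹' A' ∩ (fun ω => (d1 ω, XX ω)) ⁻¹' B'
      = Φ ⁻¹' (At ∩ Bt) := rfl
  have hPAB : P ((fun ω => (d0 ω, XX ω)) ⁻¹' A' ∩ (fun ω => (d1 ω, XX ω)) ⁻¹' B')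
      = ∫⁻ y, μ (Prod.mk y.1 ⁻¹' A' ∩ Prod.mk y.2 ⁻¹' B') ∂κ := by
    rw [hABpre, ← Measure.map_apply hΦ (hAtc.inter hBtc), hρ,
      Measure.prod_apply (hAtc.inter hBtc)]
    rfl
  -- pointwise bound
  have hpt : ∀ y : Λ₀ × Λ₁,
      μ (Prod.mk y.1 ⁻¹' A' ∩ Prod.mk y.2 ⁻¹' B')
        ≤ μ (Prod.mk y.1 ⁻¹' A') * μ (Prod.mk y.2 ⁻¹' B') + ENNReal.ofReal α ∧
      μ (Prod.mk y.1 ⁻¹' A') * μ (Prod.mk y.2 ⁻¹' B')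
        ≤ μ (Prod.mk y.1 ⁻¹' A' ∩ Prod.mk y.2 ⁻¹' B') + ENNReal.ofReal α := by
    intro y
    have hAyc : MeasurableSet (Prod.mk y.1 ⁻¹' A') := measurable_prodMk_left hA'c
    have hByc : MeasurableSet (Prod.mk y.2 ⁻¹' B') := measurable_prodMk_left hB'c
    have hAyF : MeasurableSet[MF] (Prod.mk y.1 ⁻¹' A') :=
      (@measurable_prodMk_left Λ₀ Γ inferInstance MF y.1) hA'm
    have hByG : MeasurableSet[MG] (Prod.mk y.2 ⁻¹' B') :=
      (@measurable_prodMk_left Λ₁ Γ inferInstance MG y.2) hB'm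
    have e1 : μ (Prod.mk y.1 ⁻¹' A' ∩ Prod.mk y.2 ⁻¹' B')
        = P (XX ⁻¹' (Prod.mk y.1 ⁻¹' A') ∩ XX ⁻¹' (Prod.mk y.2 ⁻¹' B')) := by
      rw [hμdef, Measure.map_apply hXX (hAyc.inter hByc), Set.preimage_inter]
    have e2 : μ (Prod.mk y.1 ⁻¹' A') = P (XX ⁻¹' (Prod.mk y.1 ⁻¹' A')) :=
      Measure.map_apply hXX hAyc
    have e3 : μ (Prod.mk y.2 ⁻¹' B') = P (XX ⁻¹' (Prod.mk y.2 ⁻¹' B')) :=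
      Measure.map_apply hXX hByc
    have hc := hcore (XX ⁻¹' (Prod.mk y.1 ⁻¹' A')) (XX ⁻¹' (Prod.mk y.2 ⁻¹' B'))
      ⟨_, hAyF, rfl⟩ ⟨_, hByG, rfl⟩
    rw [← e1, ← e2, ← e3] at hc
    exact step1 prob_le_one prob_le_one prob_le_one hc
  -- measurability of the section-measure functions
  have hfA : Measurable fun y0 : Λ₀ => μ (Prod.mk y0 ⁻¹' A') :=
    measurable_measure_prodMk_left hA'c
  have hfB : Measurable fun y1 : Λ₁ => μ (Prod.mk y1 ⁻¹' B') :=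
    measurable_measure_prodMk_left hB'c
  -- product of the two probabilities
  have hprod : P ((fun ω => (d0 ω, XX ω)) ⁻¹' A') * P ((fun ω => (d1 ω, XX ω)) ⁻¹' B')
      = ∫⁻ y, μ (Prod.mk y.1 ⁻¹' A') * μ (Prod.mk y.2 ⁻¹' B') ∂κ := by
    rw [hPA, hPB, hκdef, lintegral_prod_mul hfA.aemeasurable hfB.aemeasurable]
  set I1 := ∫⁻ y, μ (Prod.mk y.1 ⁻¹' A' ∩ Prod.mk y.2 ⁻¹' B') ∂κ with hI1
  set I2 := ∫⁻ y, μ (Prod.mk y.1 ⁻¹' A') * μ (Prod.mk y.2 ⁻¹' B') ∂κ with hI2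
  have hI1le : I1 ≤ 1 := by
    calc I1 ≤ ∫⁻ _, 1 ∂κ := lintegral_mono fun y => prob_le_one
      _ = 1 := by simp
  have hI2le : I2 ≤ 1 := by
    calc I2 ≤ ∫⁻ _, 1 ∂κ := lintegral_mono fun y =>
        mul_le_one' prob_le_one prob_le_one
      _ = 1 := by simp
  have h12 : I1 ≤ I2 + ENNReal.ofReal α := by
    calc I1 ≤ ∫⁻ y, (μ (Prod.mk y.1 ⁻¹' A') * μ (Prod.mk y.2 ⁻¹' B') + ENNReal.ofReal α) ∂κ :=
        lintegral_mono fun y => (hpt y).1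
      _ = I2 + ENNReal.ofReal α := by
        rw [lintegral_add_right _ measurable_const, lintegral_const, measure_univ, mul_one]
  have h21 : I2 ≤ I1 + ENNReal.ofReal α := by
    calc I2 ≤ ∫⁻ y, (μ (Prod.mk y.1 ⁻¹' A' ∩ Prod.mk y.2 ⁻¹' B') + ENNReal.ofReal α) ∂κ :=
        lintegral_mono fun y => (hpt y).2
      _ = I1 + ENNReal.ofReal α := by
        rw [lintegral_add_right _ measurable_const, lintegral_const, measure_univ, mul_one]
  have hfinal := step2 (a := I1) (b := I2)
    ((hI1le.trans_lt ENNReal.one_lt_top).ne) ((hI2le.trans_lt ENNReal.one_lt_top).ne)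
    hα h12 h21
  have hgoal : (P ((fun ω => (d0 ω, XX ω)) ⁻¹' A')).toReal
      * (P ((fun ω => (d1 ω, XX ω)) ⁻¹' B')).toReal = I2.toReal := by
    rw [← ENNReal.toReal_mul, hprod]
  rw [hPAB, hgoal]
  exact hfinal

end StrongMixAux

/-- The σ-algebra `σ(W u : u ≤ 0)` generated by the past of the sequence. -/
def pastSigma {Ω : Type*} (W : ℤ → Ω → ℝ) : MeasurableSpace Ω :=
  ⨆ u : ℤ, ⨆ _ : u ≤ 0, MeasurableSpace.comap (W u) inferInstance

/-- The σ-algebra `σ(W v : v ≥ t)` generated by the future of the sequence from time `t`. -/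
def futureSigma {Ω : Type*} (W : ℤ → Ω → ℝ) (t : ℤ) : MeasurableSpace Ω :=
  ⨆ v : ℤ, ⨆ _ : t ≤ v, MeasurableSpace.comap (W v) inferInstance

/-- The strong (α-) mixing coefficient of the sequence `W` at lag `t`. -/
noncomputable def alphaMix {Ω : Type*} [MeasurableSpace Ω] (P : Measure Ω)
    (W : ℤ → Ω → ℝ) (t : ℤ) : ℝ :=
  sSup {r : ℝ | ∃ A B : Set Ω, MeasurableSet[pastSigma W] A ∧
    MeasurableSet[futureSigma W t] B ∧
    r = |(P (A ∩ B)).toReal - (P A).toReal * (P B).toReal|}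

theorem stmt_19 {Ω : Type*} [MeasurableSpace Ω] (P : Measure Ω) [IsProbabilityMeasure P]
    (X δ : ℤ → Ω → ℝ)
    (hmeasX : ∀ t, Measurable (X t)) (hmeasδ : ∀ t, Measurable (δ t))
    (hiidδ : iIndepFun δ P)
    (hidδ : ∀ t : ℤ, IdentDistrib (δ t) (δ 1) P P)
    (hindep : IndepFun (fun ω => fun t : ℤ => X t ω) (fun ω => fun t : ℤ => δ t ω) P)
    (g : ℝ × ℝ × ℝ → ℝ) (hg : Measurable g) :
    ∀ t : ℤ, 2 ≤ t →
      alphaMix P (fun s ω => g (X s ω, δ s ω, δ (s - 1) ω)) t ≤ alphaMix P X t := by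
  intro t ht
  -- measurability of the path maps
  have hXXm : Measurable (fun ω (s : ℤ) => X s ω) := measurable_pi_lambda _ hmeasX
  have hd0m : Measurable (fun ω (u : {u : ℤ // u ≤ 0}) => δ u.1 ω) :=
    measurable_pi_lambda _ fun u => hmeasδ u.1
  have hd1m : Measurable (fun ω (v : {v : ℤ // t - 1 ≤ v}) => δ v.1 ω) :=
    measurable_pi_lambda _ fun v => hmeasδ v.1
  -- comap identities for the past/future σ-algebras
  have hFc : MeasurableSpace.comap (fun ω (s : ℤ) => X s ω)
      (⨆ u : ℤ, ⨆ _ : u ≤ 0, MeasurableSpace.comap (fun p : ℤ → ℝ => p u) inferInstance)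
      = pastSigma X := by
    unfold pastSigma
    rw [MeasurableSpace.comap_iSup]
    refine iSup_congr fun u => ?_
    rw [MeasurableSpace.comap_iSup]
    exact iSup_congr fun _ => MeasurableSpace.comap_comp
  have hGc : MeasurableSpace.comap (fun ω (s : ℤ) => X s ω)
      (⨆ v : ℤ, ⨆ _ : t ≤ v, MeasurableSpace.comap (fun p : ℤ → ℝ => p v) inferInstance)
      = futureSigma X t := by
    unfold futureSigma
    rw [MeasurableSpace.comap_iSup]
    refine iSup_congr fun v => ?_
    rw [MeasurableSpace.comap_iSup]
    exact iSup_congr fun _ => MeasurableSpace.comap_comp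
  have hd0c : MeasurableSpace.comap (fun ω (u : {u : ℤ // u ≤ 0}) => δ u.1 ω)
      MeasurableSpace.pi
      = ⨆ u : ℤ, ⨆ _ : u ≤ 0, MeasurableSpace.comap (δ u) inferInstance := by
    rw [StrongMixAux.comap_pi_eq (fun u : {u : ℤ // u ≤ 0} => δ u.1)]
    exact iSup_subtype
  have hd1c : MeasurableSpace.comap (fun ω (v : {v : ℤ // t - 1 ≤ v}) => δ v.1 ω)
      MeasurableSpace.pi
      = ⨆ v : ℤ, ⨆ _ : t - 1 ≤ v, MeasurableSpace.comap (δ v) inferInstance := by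
    rw [StrongMixAux.comap_pi_eq (fun v : {v : ℤ // t - 1 ≤ v} => δ v.1)]
    exact iSup_subtype
  -- the past σ-algebra of ξ is contained in past of X ⊔ past of δ
  have hsubA : pastSigma (fun s ω => g (X s ω, δ s ω, δ (s - 1) ω))
      ≤ pastSigma X ⊔ ⨆ u : ℤ, ⨆ _ : u ≤ 0, MeasurableSpace.comap (δ u) inferInstance := by
    unfold pastSigma
    refine iSup_le fun u => iSup_le fun hu => ?_
    have h1 : MeasurableSpace.comap (fun ω => g (X u ω, δ u ω, δ (u - 1) ω))
          (inferInstance : MeasurableSpace ℝ)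
        = MeasurableSpace.comap (fun ω => (X u ω, (δ u ω, δ (u - 1) ω)))
            (MeasurableSpace.comap g inferInstance) := MeasurableSpace.comap_comp.symm
    rw [h1]
    refine le_trans (MeasurableSpace.comap_mono hg.comap_le) ?_
    rw [StrongMixAux.comap_prodMk (fun ω => X u ω) (fun ω => (δ u ω, δ (u - 1) ω)),
      StrongMixAux.comap_prodMk (fun ω => δ u ω) (fun ω => δ (u - 1) ω)]
    refine sup_le_sup ?_ (sup_le ?_ ?_)
    · exact le_iSup_of_le u (le_iSup_of_le hu le_rfl)
    · exact le_iSup_of_le u (le_iSup_of_le hu le_rfl)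
    · exact le_iSup_of_le (u - 1) (le_iSup_of_le (by omega) le_rfl)
  have hsubB : futureSigma (fun s ω => g (X s ω, δ s ω, δ (s - 1) ω)) t
      ≤ futureSigma X t
        ⊔ ⨆ v : ℤ, ⨆ _ : t - 1 ≤ v, MeasurableSpace.comap (δ v) inferInstance := by
    unfold futureSigma
    refine iSup_le fun v => iSup_le fun hv => ?_
    have h1 : MeasurableSpace.comap (fun ω => g (X v ω, δ v ω, δ (v - 1) ω))
          (inferInstance : MeasurableSpace ℝ)
        = MeasurableSpace.comap (fun ω => (X v ω, (δ v ω, δ (v - 1) ω)))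
            (MeasurableSpace.comap g inferInstance) := MeasurableSpace.comap_comp.symm
    rw [h1]
    refine le_trans (MeasurableSpace.comap_mono hg.comap_le) ?_
    rw [StrongMixAux.comap_prodMk (fun ω => X v ω) (fun ω => (δ v ω, δ (v - 1) ω)),
      StrongMixAux.comap_prodMk (fun ω => δ v ω) (fun ω => δ (v - 1) ω)]
    refine sup_le_sup ?_ (sup_le ?_ ?_)
    · exact le_iSup_of_le v (le_iSup_of_le hv le_rfl)
    · exact le_iSup_of_le v (le_iSup_of_le (by omega) le_rfl)
    · exact le_iSup_of_le (v - 1) (le_iSup_of_le (by omega) le_rfl)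
  -- independence of the two δ-blocks
  have hdisj : Disjoint {u : ℤ | u ≤ 0} {v : ℤ | t - 1 ≤ v} := by
    rw [Set.disjoint_left]
    intro a ha hb
    simp only [Set.mem_setOf_eq] at ha hb
    omega
  have hindσ := indep_iSup_of_disjoint (fun i : ℤ => (hmeasδ i).comap_le)
    hiidδ.iIndep hdisj
  have h01 : IndepFun (fun ω (u : {u : ℤ // u ≤ 0}) => δ u.1 ω)
      (fun ω (v : {v : ℤ // t - 1 ≤ v}) => δ v.1 ω) P := by
    show Indep
      (MeasurableSpace.comap (fun ω (u : {u : ℤ // u ≤ 0}) => δ u.1 ω) MeasurableSpace.pi)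
      (MeasurableSpace.comap (fun ω (v : {v : ℤ // t - 1 ≤ v}) => δ v.1 ω) MeasurableSpace.pi)
      P
    rw [hd0c, hd1c]
    exact hindσ
  -- independence of the pair of δ-blocks from the X path
  have hpair : IndepFun
      (fun ω => ((fun u : {u : ℤ // u ≤ 0} => δ u.1 ω),
        (fun v : {v : ℤ // t - 1 ≤ v} => δ v.1 ω)))
      (fun ω (s : ℤ) => X s ω) P := by
    have hφ : Measurable (fun p : ℤ → ℝ => ((fun u : {u : ℤ // u ≤ 0} => p u.1),
        (fun v : {v : ℤ // t - 1 ≤ v} => p v.1))) :=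
      Measurable.prodMk (measurable_pi_lambda _ fun u => measurable_pi_apply u.1)
        (measurable_pi_lambda _ fun v => measurable_pi_apply v.1)
    have := hindep.symm.comp hφ measurable_id
    exact this
  -- boundedness of the defining set of `alphaMix P X t`
  have htr : ∀ s : Set Ω, (P s).toReal ≤ 1 := fun s => by
    simpa using ENNReal.toReal_mono ENNReal.one_ne_top (prob_le_one (μ := P) (s := s))
  have hbdd : BddAbove {r : ℝ | ∃ A B : Set Ω, MeasurableSet[pastSigma X] A ∧
      MeasurableSet[futureSigma X t] B ∧
      r = |(P (A ∩ B)).toReal - (P A).toReal * (P B).toReal|} := by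
    refine ⟨1, fun r hr => ?_⟩
    obtain ⟨A, B, -, -, rfl⟩ := hr
    have h1 : (P (A ∩ B)).toReal ≤ 1 := htr _
    have h2 : (P A).toReal ≤ 1 := htr _
    have h3 : (P B).toReal ≤ 1 := htr _
    have h4 : (0 : ℝ) ≤ (P (A ∩ B)).toReal := ENNReal.toReal_nonneg
    have h5 : (0 : ℝ) ≤ (P A).toReal := ENNReal.toReal_nonneg
    have h6 : (0 : ℝ) ≤ (P B).toReal := ENNReal.toReal_nonneg
    have h7 : (P A).toReal * (P B).toReal ≤ 1 := mul_le_one₀ h2 h6 h3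
    have h8 : (0 : ℝ) ≤ (P A).toReal * (P B).toReal := mul_nonneg h5 h6
    rw [abs_le]
    constructor <;> linarith
  have hα0 : 0 ≤ alphaMix P X t := by
    refine le_csSup hbdd ⟨∅, ∅, @MeasurableSet.empty _ (pastSigma X), @MeasurableSet.empty _ (futureSigma X t), ?_⟩
    simp
  -- the core bound from the definition of `alphaMix P X t`
  have hcore : ∀ A B : Set Ω,
      MeasurableSet[MeasurableSpace.comap (fun ω (s : ℤ) => X s ω)
        (⨆ u : ℤ, ⨆ _ : u ≤ 0,
          MeasurableSpace.comap (fun p : ℤ → ℝ => p u) inferInstance)] A →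
      MeasurableSet[MeasurableSpace.comap (fun ω (s : ℤ) => X s ω)
        (⨆ v : ℤ, ⨆ _ : t ≤ v,
          MeasurableSpace.comap (fun p : ℤ → ℝ => p v) inferInstance)] B →
      |(P (A ∩ B)).toReal - (P A).toReal * (P B).toReal| ≤ alphaMix P X t := by
    intro A B hA hB
    refine le_csSup hbdd ⟨A, B, ?_, ?_, rfl⟩
    · exact hFc ▸ hA
    · exact hGc ▸ hB
  -- σ-algebras on the path space are below the ambient one
  have hFle : (⨆ u : ℤ, ⨆ _ : u ≤ 0,
      MeasurableSpace.comap (fun p : ℤ → ℝ => p u) inferInstance) ≤ MeasurableSpace.pi :=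
    iSup_le fun u => iSup_le fun _ => (measurable_pi_apply u).comap_le
  have hGle : (⨆ v : ℤ, ⨆ _ : t ≤ v,
      MeasurableSpace.comap (fun p : ℤ → ℝ => p v) inferInstance) ≤ MeasurableSpace.pi :=
    iSup_le fun v => iSup_le fun _ => (measurable_pi_apply v).comap_le
  -- finish
  refine Real.sSup_le ?_ hα0
  rintro r ⟨A, B, hA, hB, rfl⟩
  refine StrongMixAux.abstract_bound P
    (⨆ u : ℤ, ⨆ _ : u ≤ 0, MeasurableSpace.comap (fun p : ℤ → ℝ => p u) inferInstance)
    (⨆ v : ℤ, ⨆ _ : t ≤ v, MeasurableSpace.comap (fun p : ℤ → ℝ => p v) inferInstance)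
    (fun ω (s : ℤ) => X s ω)
    (fun ω (u : {u : ℤ // u ≤ 0}) => δ u.1 ω)
    (fun ω (v : {v : ℤ // t - 1 ≤ v}) => δ v.1 ω)
    hXXm hd0m hd1m h01 hpair hFle hGle (alphaMix P X t) hα0 hcore ?_ ?_
  · have hle : pastSigma (fun s ω => g (X s ω, δ s ω, δ (s - 1) ω))
        ≤ MeasurableSpace.comap (fun ω (s : ℤ) => X s ω)
            (⨆ u : ℤ, ⨆ _ : u ≤ 0,
              MeasurableSpace.comap (fun p : ℤ → ℝ => p u) inferInstance)
          ⊔ MeasurableSpace.comap (fun ω (u : {u : ℤ // u ≤ 0}) => δ u.1 ω)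
              MeasurableSpace.pi := by
      rw [hFc, hd0c]
      exact hsubA
    exact hle _ hA
  · have hle : futureSigma (fun s ω => g (X s ω, δ s ω, δ (s - 1) ω)) t
        ≤ MeasurableSpace.comap (fun ω (s : ℤ) => X s ω)
            (⨆ v : ℤ, ⨆ _ : t ≤ v,
              MeasurableSpace.comap (fun p : ℤ → ℝ => p v) inferInstance)
          ⊔ MeasurableSpace.comap (fun ω (v : {v : ℤ // t - 1 ≤ v}) => δ v.1 ω)
              MeasurableSpace.pi := by
      rw [hGc, hd1c]
      exact hsubB
    exact hle _ hB
end
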